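/- arXiv:0901.2261 — 5 statements merged into one kernel-verified Lean document; each statement's English description precedes it below -/
import Mathlib

section
/- Let ψ be a quartic spinor and let ω be a quadratic spinor with ⟨ω,ω⟩ ≠ 0 that satisfies the algebraic Kähler condition with respect to ψ. Then there exists a constant c ∈ ℂ such that ψ_{ABCD} = c·(ω⊙ω)_{ABCD} for all A,B,C,D ∈ {0,1}; that is, ψ is of algebraic type D, a multiple of the symmetrized square of ω. -/
noncomputable section

open Finset

/-- The symplectic array ε with ε₀₁ = 1, ε₁₀ = −1, ε₀₀ = ε₁₁ = 0.
The same array is used with upper indices. -/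
def eps : Fin 2 → Fin 2 → ℂ := ![![0, 1], ![-1, 0]]

/-- A quartic spinor: invariance under all permutations of its four arguments
(equivalently, under the adjacent transpositions, which generate S₄). -/
def IsQuartic (ψ : Fin 2 → Fin 2 → Fin 2 → Fin 2 → ℂ) : Prop :=
  ∀ A B C D : Fin 2,
    ψ A B C D = ψ B A C D ∧ ψ A B C D = ψ A C B D ∧ ψ A B C D = ψ A B D C

/-- A quadratic spinor: a symmetric map. -/
def IsQuadratic (ω : Fin 2 → Fin 2 → ℂ) : Prop := ∀ A B : Fin 2, ω A B = ω B A

/-- ⟨ψ,ψ⟩ for a quartic spinor. -/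
def quarticInner (ψ : Fin 2 → Fin 2 → Fin 2 → Fin 2 → ℂ) : ℂ :=
  ∑ A, ∑ B, ∑ C, ∑ D, ∑ A1, ∑ B1, ∑ C1, ∑ D1,
    eps A A1 * eps B B1 * eps C C1 * eps D D1 * ψ A B C D * ψ A1 B1 C1 D1

/-- ⟨ω,ω⟩ for a quadratic spinor. -/
def quadInner (ω : Fin 2 → Fin 2 → ℂ) : ℂ :=
  ∑ A, ∑ B, ∑ A1, ∑ B1, eps A A1 * eps B B1 * ω A B * ω A1 B1

/-- The symmetrized square (ω⊙ω) of a quadratic spinor. -/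
def symSq (ω : Fin 2 → Fin 2 → ℂ) : Fin 2 → Fin 2 → Fin 2 → Fin 2 → ℂ :=
  fun A B C D => (1/3 : ℂ) * (ω A B * ω C D + ω A C * ω B D + ω A D * ω B C)

/-- The algebraic Kähler condition:
∑_σ ∑_{E,F} ε^{EF} ψ_{F σ(A) σ(B) σ(C)} ω_{σ(D) E} = 0 for all A,B,C,D. -/
def AlgKahler (ψ : Fin 2 → Fin 2 → Fin 2 → Fin 2 → ℂ) (ω : Fin 2 → Fin 2 → ℂ) : Prop :=
  ∀ A B C D : Fin 2,
    ∑ σ : Equiv.Perm (Fin 4), ∑ E, ∑ F,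
      eps E F * ψ F (![A, B, C, D] (σ 0)) (![A, B, C, D] (σ 1)) (![A, B, C, D] (σ 2)) *
        ω (![A, B, C, D] (σ 3)) E = 0

def pe (i : Fin 4) (j : Fin 3) (k : Fin 2) : Equiv.Perm (Fin 4) :=
  Equiv.Perm.decomposeFin.symm (i, Equiv.Perm.decomposeFin.symm (j, Equiv.Perm.decomposeFin.symm (k, 1)))

lemma sum_perm4 (G : Equiv.Perm (Fin 4) → ℂ) :
    ∑ σ : Equiv.Perm (Fin 4), G σ = ∑ i : Fin 4, ∑ j : Fin 3, ∑ k : Fin 2, G (pe i j k) := by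
  rw [← Equiv.sum_comp (Equiv.Perm.decomposeFin (n := 3)).symm G, Fintype.sum_prod_type]
  refine Finset.sum_congr rfl fun i _ => ?_
  rw [← Equiv.sum_comp (Equiv.Perm.decomposeFin (n := 2)).symm, Fintype.sum_prod_type]
  refine Finset.sum_congr rfl fun j _ => ?_
  rw [← Equiv.sum_comp (Equiv.Perm.decomposeFin (n := 1)).symm, Fintype.sum_prod_type]
  refine Finset.sum_congr rfl fun k _ => ?_
  rw [Fintype.sum_subsingleton _ 1]; rfl

lemma pe_0_0_0_0 : pe 0 0 0 0 = 0 := by decide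
lemma pe_0_0_0_1 : pe 0 0 0 1 = 1 := by decide
lemma pe_0_0_0_2 : pe 0 0 0 2 = 2 := by decide
lemma pe_0_0_0_3 : pe 0 0 0 3 = 3 := by decide
lemma pe_0_0_1_0 : pe 0 0 1 0 = 0 := by decide
lemma pe_0_0_1_1 : pe 0 0 1 1 = 1 := by decide
lemma pe_0_0_1_2 : pe 0 0 1 2 = 3 := by decide
lemma pe_0_0_1_3 : pe 0 0 1 3 = 2 := by decide
lemma pe_0_1_0_0 : pe 0 1 0 0 = 0 := by decide
lemma pe_0_1_0_1 : pe 0 1 0 1 = 2 := by decide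
lemma pe_0_1_0_2 : pe 0 1 0 2 = 1 := by decide
lemma pe_0_1_0_3 : pe 0 1 0 3 = 3 := by decide
lemma pe_0_1_1_0 : pe 0 1 1 0 = 0 := by decide
lemma pe_0_1_1_1 : pe 0 1 1 1 = 2 := by decide
lemma pe_0_1_1_2 : pe 0 1 1 2 = 3 := by decide
lemma pe_0_1_1_3 : pe 0 1 1 3 = 1 := by decide
lemma pe_0_2_0_0 : pe 0 2 0 0 = 0 := by decide
lemma pe_0_2_0_1 : pe 0 2 0 1 = 3 := by decide
lemma pe_0_2_0_2 : pe 0 2 0 2 = 2 := by decide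
lemma pe_0_2_0_3 : pe 0 2 0 3 = 1 := by decide
lemma pe_0_2_1_0 : pe 0 2 1 0 = 0 := by decide
lemma pe_0_2_1_1 : pe 0 2 1 1 = 3 := by decide
lemma pe_0_2_1_2 : pe 0 2 1 2 = 1 := by decide
lemma pe_0_2_1_3 : pe 0 2 1 3 = 2 := by decide
lemma pe_1_0_0_0 : pe 1 0 0 0 = 1 := by decide
lemma pe_1_0_0_1 : pe 1 0 0 1 = 0 := by decide
lemma pe_1_0_0_2 : pe 1 0 0 2 = 2 := by decide
lemma pe_1_0_0_3 : pe 1 0 0 3 = 3 := by decide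
lemma pe_1_0_1_0 : pe 1 0 1 0 = 1 := by decide
lemma pe_1_0_1_1 : pe 1 0 1 1 = 0 := by decide
lemma pe_1_0_1_2 : pe 1 0 1 2 = 3 := by decide
lemma pe_1_0_1_3 : pe 1 0 1 3 = 2 := by decide
lemma pe_1_1_0_0 : pe 1 1 0 0 = 1 := by decide
lemma pe_1_1_0_1 : pe 1 1 0 1 = 2 := by decide
lemma pe_1_1_0_2 : pe 1 1 0 2 = 0 := by decide
lemma pe_1_1_0_3 : pe 1 1 0 3 = 3 := by decide
lemma pe_1_1_1_0 : pe 1 1 1 0 = 1 := by decide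
lemma pe_1_1_1_1 : pe 1 1 1 1 = 2 := by decide
lemma pe_1_1_1_2 : pe 1 1 1 2 = 3 := by decide
lemma pe_1_1_1_3 : pe 1 1 1 3 = 0 := by decide
lemma pe_1_2_0_0 : pe 1 2 0 0 = 1 := by decide
lemma pe_1_2_0_1 : pe 1 2 0 1 = 3 := by decide
lemma pe_1_2_0_2 : pe 1 2 0 2 = 2 := by decide
lemma pe_1_2_0_3 : pe 1 2 0 3 = 0 := by decide
lemma pe_1_2_1_0 : pe 1 2 1 0 = 1 := by decide
lemma pe_1_2_1_1 : pe 1 2 1 1 = 3 := by decide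
lemma pe_1_2_1_2 : pe 1 2 1 2 = 0 := by decide
lemma pe_1_2_1_3 : pe 1 2 1 3 = 2 := by decide
lemma pe_2_0_0_0 : pe 2 0 0 0 = 2 := by decide
lemma pe_2_0_0_1 : pe 2 0 0 1 = 1 := by decide
lemma pe_2_0_0_2 : pe 2 0 0 2 = 0 := by decide
lemma pe_2_0_0_3 : pe 2 0 0 3 = 3 := by decide
lemma pe_2_0_1_0 : pe 2 0 1 0 = 2 := by decide
lemma pe_2_0_1_1 : pe 2 0 1 1 = 1 := by decide
lemma pe_2_0_1_2 : pe 2 0 1 2 = 3 := by decide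
lemma pe_2_0_1_3 : pe 2 0 1 3 = 0 := by decide
lemma pe_2_1_0_0 : pe 2 1 0 0 = 2 := by decide
lemma pe_2_1_0_1 : pe 2 1 0 1 = 0 := by decide
lemma pe_2_1_0_2 : pe 2 1 0 2 = 1 := by decide
lemma pe_2_1_0_3 : pe 2 1 0 3 = 3 := by decide
lemma pe_2_1_1_0 : pe 2 1 1 0 = 2 := by decide
lemma pe_2_1_1_1 : pe 2 1 1 1 = 0 := by decide
lemma pe_2_1_1_2 : pe 2 1 1 2 = 3 := by decide
lemma pe_2_1_1_3 : pe 2 1 1 3 = 1 := by decide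
lemma pe_2_2_0_0 : pe 2 2 0 0 = 2 := by decide
lemma pe_2_2_0_1 : pe 2 2 0 1 = 3 := by decide
lemma pe_2_2_0_2 : pe 2 2 0 2 = 0 := by decide
lemma pe_2_2_0_3 : pe 2 2 0 3 = 1 := by decide
lemma pe_2_2_1_0 : pe 2 2 1 0 = 2 := by decide
lemma pe_2_2_1_1 : pe 2 2 1 1 = 3 := by decide
lemma pe_2_2_1_2 : pe 2 2 1 2 = 1 := by decide
lemma pe_2_2_1_3 : pe 2 2 1 3 = 0 := by decide
lemma pe_3_0_0_0 : pe 3 0 0 0 = 3 := by decide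
lemma pe_3_0_0_1 : pe 3 0 0 1 = 1 := by decide
lemma pe_3_0_0_2 : pe 3 0 0 2 = 2 := by decide
lemma pe_3_0_0_3 : pe 3 0 0 3 = 0 := by decide
lemma pe_3_0_1_0 : pe 3 0 1 0 = 3 := by decide
lemma pe_3_0_1_1 : pe 3 0 1 1 = 1 := by decide
lemma pe_3_0_1_2 : pe 3 0 1 2 = 0 := by decide
lemma pe_3_0_1_3 : pe 3 0 1 3 = 2 := by decide
lemma pe_3_1_0_0 : pe 3 1 0 0 = 3 := by decide
lemma pe_3_1_0_1 : pe 3 1 0 1 = 2 := by decide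
lemma pe_3_1_0_2 : pe 3 1 0 2 = 1 := by decide
lemma pe_3_1_0_3 : pe 3 1 0 3 = 0 := by decide
lemma pe_3_1_1_0 : pe 3 1 1 0 = 3 := by decide
lemma pe_3_1_1_1 : pe 3 1 1 1 = 2 := by decide
lemma pe_3_1_1_2 : pe 3 1 1 2 = 0 := by decide
lemma pe_3_1_1_3 : pe 3 1 1 3 = 1 := by decide
lemma pe_3_2_0_0 : pe 3 2 0 0 = 3 := by decide
lemma pe_3_2_0_1 : pe 3 2 0 1 = 0 := by decide
lemma pe_3_2_0_2 : pe 3 2 0 2 = 2 := by decide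
lemma pe_3_2_0_3 : pe 3 2 0 3 = 1 := by decide
lemma pe_3_2_1_0 : pe 3 2 1 0 = 3 := by decide
lemma pe_3_2_1_1 : pe 3 2 1 1 = 0 := by decide
lemma pe_3_2_1_2 : pe 3 2 1 2 = 1 := by decide
lemma pe_3_2_1_3 : pe 3 2 1 3 = 2 := by decide

/-- if ω is a quadratic spinor with ⟨ω,ω⟩ ≠ 0 satisfying the algebraic Kähler
condition with respect to a quartic spinor ψ, then ψ = c·(ω⊙ω) for some constant c. -/
theorem quartic_is_typeD_of_algKahler
    (ψ : Fin 2 → Fin 2 → Fin 2 → Fin 2 → ℂ) (ω : Fin 2 → Fin 2 → ℂ)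
    (hψ : IsQuartic ψ) (hω : IsQuadratic ω)
    (hnn : quadInner ω ≠ 0) (halg : AlgKahler ψ ω) :
    ∃ c : ℂ, ∀ A B C D : Fin 2, ψ A B C D = c * symSq ω A B C D := by
  have e00 : eps 0 0 = 0 := rfl
  have e01 : eps 0 1 = 1 := rfl
  have e10 : eps 1 0 = -1 := rfl
  have e11 : eps 1 1 = 0 := rfl
  have hw : ω 1 0 = ω 0 1 := hω 1 0
  have mv0 : ∀ (a b c d : Fin 2), ![a, b, c, d] (0 : Fin 4) = a := fun _ _ _ _ => rfl
  have mv1 : ∀ (a b c d : Fin 2), ![a, b, c, d] (1 : Fin 4) = b := fun _ _ _ _ => rfl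
  have mv2 : ∀ (a b c d : Fin 2), ![a, b, c, d] (2 : Fin 4) = c := fun _ _ _ _ => rfl
  have mv3 : ∀ (a b c d : Fin 2), ![a, b, c, d] (3 : Fin 4) = d := fun _ _ _ _ => rfl
  have s0010 : ψ 0 0 1 0 = ψ 0 0 0 1 := (hψ 0 0 1 0).2.2
  have s0100 : ψ 0 1 0 0 = ψ 0 0 0 1 := ((hψ 0 1 0 0).2.1).trans (hψ 0 0 1 0).2.2
  have s0101 : ψ 0 1 0 1 = ψ 0 0 1 1 := (hψ 0 1 0 1).2.1
  have s0110 : ψ 0 1 1 0 = ψ 0 0 1 1 := ((hψ 0 1 1 0).2.2).trans (hψ 0 1 0 1).2.1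
  have s1000 : ψ 1 0 0 0 = ψ 0 0 0 1 := (((hψ 1 0 0 0).1).trans (hψ 0 1 0 0).2.1).trans (hψ 0 0 1 0).2.2
  have s1001 : ψ 1 0 0 1 = ψ 0 0 1 1 := ((hψ 1 0 0 1).1).trans (hψ 0 1 0 1).2.1
  have s1010 : ψ 1 0 1 0 = ψ 0 0 1 1 := (((hψ 1 0 1 0).1).trans (hψ 0 1 1 0).2.2).trans (hψ 0 1 0 1).2.1
  have s1011 : ψ 1 0 1 1 = ψ 0 1 1 1 := (hψ 1 0 1 1).1
  have s1100 : ψ 1 1 0 0 = ψ 0 0 1 1 := ((((hψ 1 1 0 0).2.1).trans (hψ 1 0 1 0).1).trans (hψ 0 1 1 0).2.2).trans (hψ 0 1 0 1).2.1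
  have s1101 : ψ 1 1 0 1 = ψ 0 1 1 1 := ((hψ 1 1 0 1).2.1).trans (hψ 1 0 1 1).1
  have s1110 : ψ 1 1 1 0 = ψ 0 1 1 1 := (((hψ 1 1 1 0).2.2).trans (hψ 1 1 0 1).2.1).trans (hψ 1 0 1 1).1
  have K1 : ψ 0 0 0 1 * ω 0 0 - ψ 0 0 0 0 * ω 0 1 = 0 := by
    have h := halg 0 0 0 0
    rw [sum_perm4] at h
    simp only [Fin.sum_univ_four, Fin.sum_univ_three, Fin.sum_univ_two, pe_0_0_0_0, pe_0_0_0_1, pe_0_0_0_2, pe_0_0_0_3, pe_0_0_1_0, pe_0_0_1_1, pe_0_0_1_2, pe_0_0_1_3, pe_0_1_0_0, pe_0_1_0_1, pe_0_1_0_2, pe_0_1_0_3, pe_0_1_1_0, pe_0_1_1_1, pe_0_1_1_2, pe_0_1_1_3, pe_0_2_0_0, pe_0_2_0_1, pe_0_2_0_2, pe_0_2_0_3, pe_0_2_1_0, pe_0_2_1_1, pe_0_2_1_2, pe_0_2_1_3, pe_1_0_0_0, pe_1_0_0_1, pe_1_0_0_2, pe_1_0_0_3, pe_1_0_1_0, pe_1_0_1_1,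 pe_1_0_1_2, pe_1_0_1_3, pe_1_1_0_0, pe_1_1_0_1, pe_1_1_0_2, pe_1_1_0_3, pe_1_1_1_0, pe_1_1_1_1, pe_1_1_1_2, pe_1_1_1_3, pe_1_2_0_0, pe_1_2_0_1, pe_1_2_0_2, pe_1_2_0_3, pe_1_2_1_0, pe_1_2_1_1, pe_1_2_1_2, pe_1_2_1_3, pe_2_0_0_0, pe_2_0_0_1, pe_2_0_0_2, pe_2_0_0_3, pe_2_0_1_0, pe_2_0_1_1, pe_2_0_1_2, pe_2_0_1_3, pe_2_1_0_0, pe_2_1_0_1, pe_2_1_0_2, pe_2_1_0_3, pe_2_1_1_0, pe_2_1_1_1, pe_2_1_1_2, pe_2_1_1_3, pe_2_2_0_0, pe_2_2_0_1, pe_2_2_0_2, pe_2_2_0_3, pe_2_2_1_0, pe_2_2_1_1, pe_2_2_1_2, pe_2_2_1_3, pe_3_0_0_0, pe_3_0_0_1, pe_3_0_0_2, pe_3_0_0_3, pe_3_0_1_0, pe_3_0_1_1, pe_3_0_1_2, pe_3_0_1_3, pe_3_1_0_0, pe_3_1_0_1, pe_3_1_0_2, pe_3_1_0_3, pe_3_1_1_0,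 pe_3_1_1_1, pe_3_1_1_2, pe_3_1_1_3, pe_3_2_0_0, pe_3_2_0_1, pe_3_2_0_2, pe_3_2_0_3, pe_3_2_1_0, pe_3_2_1_1, pe_3_2_1_2, pe_3_2_1_3, mv0, mv1, mv2, mv3, e00, e01, e10, e11, s0010, s0100, s0101, s0110, s1000, s1001, s1010, s1011, s1100, s1101, s1110, hw] at h
    linear_combination (1/24) * h
  have K2 : 3 * ψ 0 0 1 1 * ω 0 0 - 2 * ψ 0 0 0 1 * ω 0 1 - ψ 0 0 0 0 * ω 1 1 = 0 := by
    have h := halg 0 0 0 1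
    rw [sum_perm4] at h
    simp only [Fin.sum_univ_four, Fin.sum_univ_three, Fin.sum_univ_two, pe_0_0_0_0, pe_0_0_0_1, pe_0_0_0_2, pe_0_0_0_3, pe_0_0_1_0, pe_0_0_1_1, pe_0_0_1_2, pe_0_0_1_3, pe_0_1_0_0, pe_0_1_0_1, pe_0_1_0_2, pe_0_1_0_3, pe_0_1_1_0, pe_0_1_1_1, pe_0_1_1_2, pe_0_1_1_3, pe_0_2_0_0, pe_0_2_0_1, pe_0_2_0_2, pe_0_2_0_3, pe_0_2_1_0, pe_0_2_1_1, pe_0_2_1_2, pe_0_2_1_3, pe_1_0_0_0, pe_1_0_0_1, pe_1_0_0_2, pe_1_0_0_3, pe_1_0_1_0, pe_1_0_1_1, pe_1_0_1_2, pe_1_0_1_3, pe_1_1_0_0, pe_1_1_0_1, pe_1_1_0_2, pe_1_1_0_3, pe_1_1_1_0, pe_1_1_1_1, pe_1_1_1_2, pe_1_1_1_3, pe_1_2_0_0, pe_1_2_0_1, pe_1_2_0_2, pe_1_2_0_3, pe_1_2_1_0, pe_1_2_1_1, pe_1_2_1_2, pe_1_2_1_3, pe_2_0_0_0, pe_2_0_0_1,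 pe_2_0_0_2, pe_2_0_0_3, pe_2_0_1_0, pe_2_0_1_1, pe_2_0_1_2, pe_2_0_1_3, pe_2_1_0_0, pe_2_1_0_1, pe_2_1_0_2, pe_2_1_0_3, pe_2_1_1_0, pe_2_1_1_1, pe_2_1_1_2, pe_2_1_1_3, pe_2_2_0_0, pe_2_2_0_1, pe_2_2_0_2, pe_2_2_0_3, pe_2_2_1_0, pe_2_2_1_1, pe_2_2_1_2, pe_2_2_1_3, pe_3_0_0_0, pe_3_0_0_1, pe_3_0_0_2, pe_3_0_0_3, pe_3_0_1_0, pe_3_0_1_1, pe_3_0_1_2, pe_3_0_1_3, pe_3_1_0_0, pe_3_1_0_1, pe_3_1_0_2, pe_3_1_0_3, pe_3_1_1_0, pe_3_1_1_1, pe_3_1_1_2, pe_3_1_1_3, pe_3_2_0_0, pe_3_2_0_1, pe_3_2_0_2, pe_3_2_0_3, pe_3_2_1_0, pe_3_2_1_1, pe_3_2_1_2, pe_3_2_1_3, mv0, mv1, mv2, mv3, e00, e01, e10, e11, s0010, s0100, s0101, s0110, s1000, s1001, s1010, s1011, s1100, s1101, s1110, hw] at h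
    linear_combination (1/6) * h
  have K3 : ψ 0 1 1 1 * ω 0 0 - ψ 0 0 0 1 * ω 1 1 = 0 := by
    have h := halg 0 0 1 1
    rw [sum_perm4] at h
    simp only [Fin.sum_univ_four, Fin.sum_univ_three, Fin.sum_univ_two, pe_0_0_0_0, pe_0_0_0_1, pe_0_0_0_2, pe_0_0_0_3, pe_0_0_1_0, pe_0_0_1_1, pe_0_0_1_2, pe_0_0_1_3, pe_0_1_0_0, pe_0_1_0_1, pe_0_1_0_2, pe_0_1_0_3, pe_0_1_1_0, pe_0_1_1_1, pe_0_1_1_2, pe_0_1_1_3, pe_0_2_0_0, pe_0_2_0_1, pe_0_2_0_2, pe_0_2_0_3, pe_0_2_1_0, pe_0_2_1_1, pe_0_2_1_2, pe_0_2_1_3, pe_1_0_0_0, pe_1_0_0_1, pe_1_0_0_2, pe_1_0_0_3, pe_1_0_1_0, pe_1_0_1_1, pe_1_0_1_2, pe_1_0_1_3, pe_1_1_0_0, pe_1_1_0_1, pe_1_1_0_2, pe_1_1_0_3, pe_1_1_1_0, pe_1_1_1_1, pe_1_1_1_2, pe_1_1_1_3, pe_1_2_0_0, pe_1_2_0_1,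 pe_1_2_0_2, pe_1_2_0_3, pe_1_2_1_0, pe_1_2_1_1, pe_1_2_1_2, pe_1_2_1_3, pe_2_0_0_0, pe_2_0_0_1, pe_2_0_0_2, pe_2_0_0_3, pe_2_0_1_0, pe_2_0_1_1, pe_2_0_1_2, pe_2_0_1_3, pe_2_1_0_0, pe_2_1_0_1, pe_2_1_0_2, pe_2_1_0_3, pe_2_1_1_0, pe_2_1_1_1, pe_2_1_1_2, pe_2_1_1_3, pe_2_2_0_0, pe_2_2_0_1, pe_2_2_0_2, pe_2_2_0_3, pe_2_2_1_0, pe_2_2_1_1, pe_2_2_1_2, pe_2_2_1_3, pe_3_0_0_0, pe_3_0_0_1, pe_3_0_0_2, pe_3_0_0_3, pe_3_0_1_0, pe_3_0_1_1, pe_3_0_1_2, pe_3_0_1_3, pe_3_1_0_0, pe_3_1_0_1, pe_3_1_0_2, pe_3_1_0_3, pe_3_1_1_0, pe_3_1_1_1, pe_3_1_1_2, pe_3_1_1_3, pe_3_2_0_0, pe_3_2_0_1, pe_3_2_0_2, pe_3_2_0_3, pe_3_2_1_0, pe_3_2_1_1, pe_3_2_1_2, pe_3_2_1_3, mv0, mv1,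 mv2, mv3, e00, e01, e10, e11, s0010, s0100, s0101, s0110, s1000, s1001, s1010, s1011, s1100, s1101, s1110, hw] at h
    linear_combination (1/12) * h
  have K4 : ψ 1 1 1 1 * ω 0 0 + 2 * ψ 0 1 1 1 * ω 0 1 - 3 * ψ 0 0 1 1 * ω 1 1 = 0 := by
    have h := halg 0 1 1 1
    rw [sum_perm4] at h
    simp only [Fin.sum_univ_four, Fin.sum_univ_three, Fin.sum_univ_two, pe_0_0_0_0, pe_0_0_0_1, pe_0_0_0_2, pe_0_0_0_3, pe_0_0_1_0, pe_0_0_1_1, pe_0_0_1_2, pe_0_0_1_3, pe_0_1_0_0, pe_0_1_0_1, pe_0_1_0_2, pe_0_1_0_3, pe_0_1_1_0, pe_0_1_1_1, pe_0_1_1_2, pe_0_1_1_3, pe_0_2_0_0, pe_0_2_0_1, pe_0_2_0_2, pe_0_2_0_3, pe_0_2_1_0, pe_0_2_1_1, pe_0_2_1_2, pe_0_2_1_3, pe_1_0_0_0, pe_1_0_0_1, pe_1_0_0_2, pe_1_0_0_3, pe_1_0_1_0, pe_1_0_1_1, pe_1_0_1_2, pe_1_0_1_3, pe_1_1_0_0,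 pe_1_1_0_1, pe_1_1_0_2, pe_1_1_0_3, pe_1_1_1_0, pe_1_1_1_1, pe_1_1_1_2, pe_1_1_1_3, pe_1_2_0_0, pe_1_2_0_1, pe_1_2_0_2, pe_1_2_0_3, pe_1_2_1_0, pe_1_2_1_1, pe_1_2_1_2, pe_1_2_1_3, pe_2_0_0_0, pe_2_0_0_1, pe_2_0_0_2, pe_2_0_0_3, pe_2_0_1_0, pe_2_0_1_1, pe_2_0_1_2, pe_2_0_1_3, pe_2_1_0_0, pe_2_1_0_1, pe_2_1_0_2, pe_2_1_0_3, pe_2_1_1_0, pe_2_1_1_1, pe_2_1_1_2, pe_2_1_1_3, pe_2_2_0_0, pe_2_2_0_1, pe_2_2_0_2, pe_2_2_0_3, pe_2_2_1_0, pe_2_2_1_1, pe_2_2_1_2, pe_2_2_1_3, pe_3_0_0_0, pe_3_0_0_1, pe_3_0_0_2, pe_3_0_0_3, pe_3_0_1_0, pe_3_0_1_1, pe_3_0_1_2, pe_3_0_1_3, pe_3_1_0_0, pe_3_1_0_1, pe_3_1_0_2, pe_3_1_0_3, pe_3_1_1_0, pe_3_1_1_1, pe_3_1_1_2, pe_3_1_1_3,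 pe_3_2_0_0, pe_3_2_0_1, pe_3_2_0_2, pe_3_2_0_3, pe_3_2_1_0, pe_3_2_1_1, pe_3_2_1_2, pe_3_2_1_3, mv0, mv1, mv2, mv3, e00, e01, e10, e11, s0010, s0100, s0101, s0110, s1000, s1001, s1010, s1011, s1100, s1101, s1110, hw] at h
    linear_combination (1/6) * h
  have K5 : ψ 1 1 1 1 * ω 0 1 - ψ 0 1 1 1 * ω 1 1 = 0 := by
    have h := halg 1 1 1 1
    rw [sum_perm4] at h
    simp only [Fin.sum_univ_four, Fin.sum_univ_three, Fin.sum_univ_two, pe_0_0_0_0, pe_0_0_0_1, pe_0_0_0_2, pe_0_0_0_3, pe_0_0_1_0, pe_0_0_1_1, pe_0_0_1_2, pe_0_0_1_3, pe_0_1_0_0, pe_0_1_0_1, pe_0_1_0_2, pe_0_1_0_3, pe_0_1_1_0, pe_0_1_1_1, pe_0_1_1_2, pe_0_1_1_3, pe_0_2_0_0, pe_0_2_0_1, pe_0_2_0_2, pe_0_2_0_3, pe_0_2_1_0, pe_0_2_1_1, pe_0_2_1_2, pe_0_2_1_3, pe_1_0_0_0, pe_1_0_0_1, pe_1_0_0_2,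 pe_1_0_0_3, pe_1_0_1_0, pe_1_0_1_1, pe_1_0_1_2, pe_1_0_1_3, pe_1_1_0_0, pe_1_1_0_1, pe_1_1_0_2, pe_1_1_0_3, pe_1_1_1_0, pe_1_1_1_1, pe_1_1_1_2, pe_1_1_1_3, pe_1_2_0_0, pe_1_2_0_1, pe_1_2_0_2, pe_1_2_0_3, pe_1_2_1_0, pe_1_2_1_1, pe_1_2_1_2, pe_1_2_1_3, pe_2_0_0_0, pe_2_0_0_1, pe_2_0_0_2, pe_2_0_0_3, pe_2_0_1_0, pe_2_0_1_1, pe_2_0_1_2, pe_2_0_1_3, pe_2_1_0_0, pe_2_1_0_1, pe_2_1_0_2, pe_2_1_0_3, pe_2_1_1_0, pe_2_1_1_1, pe_2_1_1_2, pe_2_1_1_3, pe_2_2_0_0, pe_2_2_0_1, pe_2_2_0_2, pe_2_2_0_3, pe_2_2_1_0, pe_2_2_1_1, pe_2_2_1_2, pe_2_2_1_3, pe_3_0_0_0, pe_3_0_0_1, pe_3_0_0_2, pe_3_0_0_3, pe_3_0_1_0, pe_3_0_1_1, pe_3_0_1_2, pe_3_0_1_3, pe_3_1_0_0, pe_3_1_0_1,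 pe_3_1_0_2, pe_3_1_0_3, pe_3_1_1_0, pe_3_1_1_1, pe_3_1_1_2, pe_3_1_1_3, pe_3_2_0_0, pe_3_2_0_1, pe_3_2_0_2, pe_3_2_0_3, pe_3_2_1_0, pe_3_2_1_1, pe_3_2_1_2, pe_3_2_1_3, mv0, mv1, mv2, mv3, e00, e01, e10, e11, s0010, s0100, s0101, s0110, s1000, s1001, s1010, s1011, s1100, s1101, s1110, hw] at h
    linear_combination (1/24) * h
  have hq : quadInner ω = 2 * (ω 0 0 * ω 1 1) - 2 * ω 0 1 ^ 2 := by
    simp only [quadInner, Fin.sum_univ_two, e00, e01, e10, e11, hw]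
    ring
  by_cases h0 : ω 0 0 = 0
  · have hw1 : ω 0 1 ≠ 0 := by
      intro h
      apply hnn
      rw [hq, h0, h]; ring
    have hw2 : (2 : ℂ) * ω 0 1 ^ 2 ≠ 0 :=
      mul_ne_zero (by norm_num) (pow_ne_zero 2 hw1)
    have hp0 : ψ 0 0 0 0 = 0 := by
      have h : ψ 0 0 0 0 * ω 0 1 = 0 := by
        linear_combination -K1 + ψ 0 0 0 1 * h0
      exact (mul_eq_zero.mp h).resolve_right hw1
    have hp1 : ψ 0 0 0 1 = 0 := by
      have h : ψ 0 0 0 1 * ω 0 1 = 0 := by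
        linear_combination (-1/2 : ℂ) * K2 + (3/2 : ℂ) * ψ 0 0 1 1 * h0 - (1/2 : ℂ) * ω 1 1 * hp0
      exact (mul_eq_zero.mp h).resolve_right hw1
    refine ⟨3 * ψ 0 0 1 1 / (2 * ω 0 1 ^ 2), ?_⟩
    have H0 : ψ 0 0 0 0 = 3 * ψ 0 0 1 1 / (2 * ω 0 1 ^ 2) *
        ((1/3 : ℂ) * (ω 0 0 * ω 0 0 + ω 0 0 * ω 0 0 + ω 0 0 * ω 0 0)) := by
      rw [hp0, h0]; ring
    have H1 : ψ 0 0 0 1 = 3 * ψ 0 0 1 1 / (2 * ω 0 1 ^ 2) *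
        ((1/3 : ℂ) * (ω 0 0 * ω 0 1 + ω 0 0 * ω 0 1 + ω 0 1 * ω 0 0)) := by
      rw [hp1, h0]; ring
    have H2 : ψ 0 0 1 1 = 3 * ψ 0 0 1 1 / (2 * ω 0 1 ^ 2) *
        ((1/3 : ℂ) * (ω 0 0 * ω 1 1 + ω 0 1 * ω 0 1 + ω 0 1 * ω 0 1)) := by
      rw [div_mul_eq_mul_div, eq_div_iff hw2]
      linear_combination (-(ψ 0 0 1 1) * ω 1 1) * h0
    have H3 : ψ 0 1 1 1 = 3 * ψ 0 0 1 1 / (2 * ω 0 1 ^ 2) *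
        ((1/3 : ℂ) * (ω 0 1 * ω 1 1 + ω 0 1 * ω 1 1 + ω 0 1 * ω 1 1)) := by
      rw [div_mul_eq_mul_div, eq_div_iff hw2]
      linear_combination ω 0 1 * K4 - ψ 1 1 1 1 * ω 0 1 * h0
    have H4 : ψ 1 1 1 1 = 3 * ψ 0 0 1 1 / (2 * ω 0 1 ^ 2) *
        ((1/3 : ℂ) * (ω 1 1 * ω 1 1 + ω 1 1 * ω 1 1 + ω 1 1 * ω 1 1)) := by
      rw [div_mul_eq_mul_div, eq_div_iff hw2]
      linear_combination 2 * ω 0 1 * K5 + ω 1 1 * K4 - ψ 1 1 1 1 * ω 1 1 * h0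
    simp only [Fin.forall_fin_two]
    repeat' apply And.intro
    all_goals simp only [symSq, hw, s0010, s0100, s0101, s0110, s1000, s1001, s1010, s1011, s1100, s1101, s1110]
    all_goals first
      | linear_combination H0
      | linear_combination H1
      | linear_combination H2
      | linear_combination H3
      | linear_combination H4
  · have hw2 : ω 0 0 ^ 2 ≠ 0 := pow_ne_zero 2 h0
    refine ⟨ψ 0 0 0 0 / ω 0 0 ^ 2, ?_⟩
    have H0 : ψ 0 0 0 0 = ψ 0 0 0 0 / ω 0 0 ^ 2 *
        ((1/3 : ℂ) * (ω 0 0 * ω 0 0 + ω 0 0 * ω 0 0 + ω 0 0 * ω 0 0)) := by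
      rw [div_mul_eq_mul_div, eq_div_iff hw2]; ring
    have H1 : ψ 0 0 0 1 = ψ 0 0 0 0 / ω 0 0 ^ 2 *
        ((1/3 : ℂ) * (ω 0 0 * ω 0 1 + ω 0 0 * ω 0 1 + ω 0 1 * ω 0 0)) := by
      rw [div_mul_eq_mul_div, eq_div_iff hw2]
      linear_combination ω 0 0 * K1
    have H2 : ψ 0 0 1 1 = ψ 0 0 0 0 / ω 0 0 ^ 2 *
        ((1/3 : ℂ) * (ω 0 0 * ω 1 1 + ω 0 1 * ω 0 1 + ω 0 1 * ω 0 1)) := by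
      rw [div_mul_eq_mul_div, eq_div_iff hw2]
      linear_combination (ω 0 0 / 3) * K2 + (2 * ω 0 1 / 3) * K1
    have H3 : ψ 0 1 1 1 = ψ 0 0 0 0 / ω 0 0 ^ 2 *
        ((1/3 : ℂ) * (ω 0 1 * ω 1 1 + ω 0 1 * ω 1 1 + ω 0 1 * ω 1 1)) := by
      rw [div_mul_eq_mul_div, eq_div_iff hw2]
      linear_combination ω 0 0 * K3 + ω 1 1 * K1
    have H4 : ψ 1 1 1 1 = ψ 0 0 0 0 / ω 0 0 ^ 2 *
        ((1/3 : ℂ) * (ω 1 1 * ω 1 1 + ω 1 1 * ω 1 1 + ω 1 1 * ω 1 1)) := by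
      rw [div_mul_eq_mul_div, eq_div_iff hw2]
      linear_combination ω 0 0 * K4 - 2 * ω 0 1 * K3 + ω 1 1 * K2
    simp only [Fin.forall_fin_two]
    repeat' apply And.intro
    all_goals simp only [symSq, hw, s0010, s0100, s0101, s0110, s1000, s1001, s1010, s1011, s1100, s1101, s1110]
    all_goals first
      | linear_combination H0
      | linear_combination H1
      | linear_combination H2
      | linear_combination H3
      | linear_combination H4
end
end

section
/- Let Θ be a nonzero quadratic spinor, let c ∈ ℂ be nonzero, and set ψ := c·(Θ⊙Θ). If a quadratic spinor ω satisfies the algebraic Kähler condition with respect to ψ, then there exists λ ∈ ℂ with ω_{AB} = λ·Θ_{AB} for all A,B ∈ {0,1}; that is, every solution of the algebraic Kähler condition for a type-D quartic spinor is proportional to Θ. -/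
noncomputable section

open Finset

/-- Expansion of a sum over all permutations of `Fin 4`. -/
lemma sum_perm4_s1 (g : Fin 4 → Fin 4 → Fin 4 → Fin 4 → ℂ) :
    ∑ σ : Equiv.Perm (Fin 4), g (σ 0) (σ 1) (σ 2) (σ 3) =
    g 0 1 2 3 + g 0 1 3 2 + g 0 2 1 3 + g 0 2 3 1 + g 0 3 2 1 + g 0 3 1 2 +
    g 1 0 2 3 + g 1 0 3 2 + g 1 2 0 3 + g 1 2 3 0 + g 1 3 2 0 + g 1 3 0 2 +
    g 2 1 0 3 + g 2 1 3 0 + g 2 0 1 3 + g 2 0 3 1 + g 2 3 0 1 + g 2 3 1 0 +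
    g 3 1 2 0 + g 3 1 0 2 + g 3 2 1 0 + g 3 2 0 1 + g 3 0 2 1 + g 3 0 1 2 := by
  simp only [← Equiv.sum_comp (Equiv.Perm.decomposeFin.symm : Fin 4 × Equiv.Perm (Fin 3) ≃ _),
    ← Equiv.sum_comp (Equiv.Perm.decomposeFin.symm : Fin 3 × Equiv.Perm (Fin 2) ≃ _),
    ← Equiv.sum_comp (Equiv.Perm.decomposeFin.symm : Fin 2 × Equiv.Perm (Fin 1) ≃ _),
    Fintype.sum_prod_type]
  simp only [Fin.sum_univ_succ, Fin.sum_univ_zero, Finset.univ_unique, Finset.sum_singleton]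
  simp only [show (1 : Fin 4) = Fin.succ 0 from rfl,
    show (2 : Fin 4) = Fin.succ (Fin.succ 0) from rfl,
    show (3 : Fin 4) = Fin.succ (Fin.succ (Fin.succ 0)) from rfl]
  simp only [Equiv.Perm.decomposeFin_symm_apply_zero, Equiv.Perm.decomposeFin_symm_apply_succ,
    show (default : Equiv.Perm (Fin 1)) = 1 from rfl, Equiv.Perm.one_apply]
  norm_num [Equiv.swap_apply_def, Fin.ext_iff]
  ring

/-- Explicit form of one instance of the algebraic Kähler condition. -/
lemma kahler_expand (ψ : Fin 2 → Fin 2 → Fin 2 → Fin 2 → ℂ) (ω : Fin 2 → Fin 2 → ℂ)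
    (h : AlgKahler ψ ω) (A B C D : Fin 2) :
    (∑ E, ∑ F, eps E F * ψ F A B C * ω D E) +
      (∑ E, ∑ F, eps E F * ψ F A B D * ω C E) +
      (∑ E, ∑ F, eps E F * ψ F A C B * ω D E) +
      (∑ E, ∑ F, eps E F * ψ F A C D * ω B E) +
      (∑ E, ∑ F, eps E F * ψ F A D C * ω B E) +
      (∑ E, ∑ F, eps E F * ψ F A D B * ω C E) +
      (∑ E, ∑ F, eps E F * ψ F B A C * ω D E) +
      (∑ E, ∑ F, eps E F * ψ F B A D * ω C E) +
      (∑ E, ∑ F, eps E F * ψ F B C A * ω D E) +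
      (∑ E, ∑ F, eps E F * ψ F B C D * ω A E) +
      (∑ E, ∑ F, eps E F * ψ F B D C * ω A E) +
      (∑ E, ∑ F, eps E F * ψ F B D A * ω C E) +
      (∑ E, ∑ F, eps E F * ψ F C B A * ω D E) +
      (∑ E, ∑ F, eps E F * ψ F C B D * ω A E) +
      (∑ E, ∑ F, eps E F * ψ F C A B * ω D E) +
      (∑ E, ∑ F, eps E F * ψ F C A D * ω B E) +
      (∑ E, ∑ F, eps E F * ψ F C D A * ω B E) +
      (∑ E, ∑ F, eps E F * ψ F C D B * ω A E) +
      (∑ E, ∑ F, eps E F * ψ F D B C * ω A E) +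
      (∑ E, ∑ F, eps E F * ψ F D B A * ω C E) +
      (∑ E, ∑ F, eps E F * ψ F D C B * ω A E) +
      (∑ E, ∑ F, eps E F * ψ F D C A * ω B E) +
      (∑ E, ∑ F, eps E F * ψ F D A C * ω B E) +
      (∑ E, ∑ F, eps E F * ψ F D A B * ω C E) = 0 :=
  (sum_perm4_s1 fun i j k l => ∑ E, ∑ F,
      eps E F * ψ F (![A, B, C, D] i) (![A, B, C, D] j) (![A, B, C, D] k) *
        ω (![A, B, C, D] l) E).symm.trans (h A B C D)

/-- for a type-D quartic spinor ψ = c·(Θ⊙Θ) with Θ ≠ 0 and c ≠ 0, every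
quadratic spinor ω satisfying the algebraic Kähler condition w.r.t. ψ is proportional to Θ. -/
theorem algKahler_solution_proportional
    (Θ : Fin 2 → Fin 2 → ℂ) (hΘ : IsQuadratic Θ) (hΘ0 : Θ ≠ fun _ _ => 0)
    (c : ℂ) (hc : c ≠ 0)
    (ω : Fin 2 → Fin 2 → ℂ) (hω : IsQuadratic ω)
    (halg : AlgKahler (fun A B C D => c * symSq Θ A B C D) ω) :
    ∃ lam : ℂ, ∀ A B : Fin 2, ω A B = lam * Θ A B := by
  have hsT : Θ 1 0 = Θ 0 1 := hΘ 1 0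
  have hsw : ω 1 0 = ω 0 1 := hω 1 0
  have h1 := kahler_expand _ _ halg 0 0 0 0
  have h2 := kahler_expand _ _ halg 0 0 0 1
  have h3 := kahler_expand _ _ halg 0 0 1 1
  have h4 := kahler_expand _ _ halg 0 1 1 1
  have h5 := kahler_expand _ _ halg 1 1 1 1
  simp only [Fin.sum_univ_two, symSq, eps, Matrix.cons_val_zero, Matrix.cons_val_one,
    Matrix.head_cons, hsT, hsw] at h1 h2 h3 h4 h5
  have e1 : Θ 0 0 * (Θ 0 1 * ω 0 0 - Θ 0 0 * ω 0 1) = 0 :=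
    (mul_eq_zero.1 (show c * (Θ 0 0 * (Θ 0 1 * ω 0 0 - Θ 0 0 * ω 0 1)) = 0 by
      linear_combination (1/24 : ℂ) * h1)).resolve_left hc
  have e2 : 2 * Θ 0 1 * (Θ 0 1 * ω 0 0 - Θ 0 0 * ω 0 1)
      + Θ 0 0 * (Θ 1 1 * ω 0 0 - Θ 0 0 * ω 1 1) = 0 :=
    (mul_eq_zero.1 (show c * (2 * Θ 0 1 * (Θ 0 1 * ω 0 0 - Θ 0 0 * ω 0 1)
      + Θ 0 0 * (Θ 1 1 * ω 0 0 - Θ 0 0 * ω 1 1)) = 0 by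
      linear_combination (1/6 : ℂ) * h2)).resolve_left hc
  have e3 : Θ 0 1 * (Θ 1 1 * ω 0 0 - Θ 0 0 * ω 1 1) = 0 :=
    (mul_eq_zero.1 (show c * (Θ 0 1 * (Θ 1 1 * ω 0 0 - Θ 0 0 * ω 1 1)) = 0 by
      linear_combination (1/12 : ℂ) * h3)).resolve_left hc
  have e4 : Θ 1 1 * (Θ 1 1 * ω 0 0 - Θ 0 0 * ω 1 1)
      + 2 * Θ 0 1 * (Θ 1 1 * ω 0 1 - Θ 0 1 * ω 1 1) = 0 :=
    (mul_eq_zero.1 (show c * (Θ 1 1 * (Θ 1 1 * ω 0 0 - Θ 0 0 * ω 1 1)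
      + 2 * Θ 0 1 * (Θ 1 1 * ω 0 1 - Θ 0 1 * ω 1 1)) = 0 by
      linear_combination (1/6 : ℂ) * h4)).resolve_left hc
  have e5 : Θ 1 1 * (Θ 1 1 * ω 0 1 - Θ 0 1 * ω 1 1) = 0 :=
    (mul_eq_zero.1 (show c * (Θ 1 1 * (Θ 1 1 * ω 0 1 - Θ 0 1 * ω 1 1)) = 0 by
      linear_combination (1/24 : ℂ) * h5)).resolve_left hc
  have key : ∃ lam : ℂ, ω 0 0 = lam * Θ 0 0 ∧ ω 0 1 = lam * Θ 0 1 ∧ ω 1 1 = lam * Θ 1 1 := by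
    by_cases hA : Θ 0 0 = 0
    · by_cases hB : Θ 0 1 = 0
      · have hD : Θ 1 1 ≠ 0 := by
          intro hD
          apply hΘ0
          funext A B
          fin_cases A <;> fin_cases B
          · exact hA
          · exact hB
          · exact hsT.trans hB
          · exact hD
        have hq : ω 0 1 = 0 := by
          have h : Θ 1 1 * Θ 1 1 * ω 0 1 = 0 := by linear_combination e5 + Θ 1 1 * ω 1 1 * hB
          simpa [hD, mul_eq_zero] using h
        have hp : ω 0 0 = 0 := by
          have h : Θ 1 1 * Θ 1 1 * ω 0 0 = 0 := by
            linear_combination e4 + Θ 1 1 * ω 1 1 * hA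
              - 2 * (Θ 1 1 * ω 0 1 - Θ 0 1 * ω 1 1) * hB
          simpa [hD, mul_eq_zero] using h
        refine ⟨ω 1 1 / Θ 1 1, ?_, ?_, ?_⟩
        · rw [hp, hA]; ring
        · rw [hq, hB]; ring
        · field_simp
      · have hu : Θ 0 1 * ω 0 0 - Θ 0 0 * ω 0 1 = 0 := by
          have h : Θ 0 1 * (2 * (Θ 0 1 * ω 0 0 - Θ 0 0 * ω 0 1)) = 0 := by
            linear_combination e2 - (Θ 1 1 * ω 0 0 - Θ 0 0 * ω 1 1) * hA
          have := (mul_eq_zero.1 h).resolve_left hB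
          linear_combination (1/2 : ℂ) * this
        have hp : ω 0 0 = 0 := by
          have h : Θ 0 1 * ω 0 0 = 0 := by linear_combination hu + ω 0 1 * hA
          exact (mul_eq_zero.1 h).resolve_left hB
        have hw : Θ 1 1 * ω 0 1 - Θ 0 1 * ω 1 1 = 0 := by
          have h : Θ 0 1 * (2 * (Θ 1 1 * ω 0 1 - Θ 0 1 * ω 1 1)) = 0 := by
            linear_combination e4 - Θ 1 1 * Θ 1 1 * hp + Θ 1 1 * ω 1 1 * hA
          have := (mul_eq_zero.1 h).resolve_left hB
          linear_combination (1/2 : ℂ) * this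
        refine ⟨ω 0 1 / Θ 0 1, ?_, ?_, ?_⟩
        · rw [hp, hA]; ring
        · field_simp
        · field_simp
          linear_combination -hw
    · have hu : Θ 0 1 * ω 0 0 - Θ 0 0 * ω 0 1 = 0 := (mul_eq_zero.1 e1).resolve_left hA
      have hv : Θ 1 1 * ω 0 0 - Θ 0 0 * ω 1 1 = 0 := by
        have h : Θ 0 0 * (Θ 1 1 * ω 0 0 - Θ 0 0 * ω 1 1) = 0 := by
          linear_combination e2 - 2 * Θ 0 1 * hu
        exact (mul_eq_zero.1 h).resolve_left hA
      have hw : Θ 1 1 * ω 0 1 - Θ 0 1 * ω 1 1 = 0 := by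
        have h : Θ 0 0 * (Θ 1 1 * ω 0 1 - Θ 0 1 * ω 1 1) = 0 := by
          linear_combination Θ 0 1 * hv - Θ 1 1 * hu
        exact (mul_eq_zero.1 h).resolve_left hA
      refine ⟨ω 0 0 / Θ 0 0, ?_, ?_, ?_⟩
      · field_simp
      · field_simp
        linear_combination -hu
      · field_simp
        linear_combination -hv
  obtain ⟨lam, k1, k2, k3⟩ := key
  refine ⟨lam, fun A B => ?_⟩
  fin_cases A <;> fin_cases B
  · exact k1
  · exact k2
  · show ω 1 0 = lam * Θ 1 0
    rw [hsw, hsT]; exact k2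
  · exact k3
end
end

section
/- For every quartic spinor ψ and all A, E ∈ {0,1}: Σ_{B,C,D ∈ {0,1}} ψ^{BCDE} ψ_{BCDA} = (1/2)·⟨ψ,ψ⟩·δ^E_A, where ψ^{BCDE} := Σ_{B',C',D',E' ∈ {0,1}} ε^{BB'} ε^{CC'} ε^{DD'} ε^{EE'} ψ_{B'C'D'E'} and δ^E_A is the Kronecker delta. -/
noncomputable section

open Finset

/-- ψ with all four indices raised by ε. -/
def quarticRaised (ψ : Fin 2 → Fin 2 → Fin 2 → Fin 2 → ℂ) :
    Fin 2 → Fin 2 → Fin 2 → Fin 2 → ℂ :=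
  fun B C D E => ∑ B1, ∑ C1, ∑ D1, ∑ E1,
    eps B B1 * eps C C1 * eps D D1 * eps E E1 * ψ B1 C1 D1 E1

set_option maxHeartbeats 2000000 in
/-- Σ_{B,C,D} ψ^{BCDE} ψ_{BCDA} = (1/2)·⟨ψ,ψ⟩·δ^E_A. -/
theorem quartic_contraction_identity
    (ψ : Fin 2 → Fin 2 → Fin 2 → Fin 2 → ℂ) (hψ : IsQuartic ψ) (A E : Fin 2) :
    ∑ B, ∑ C, ∑ D, quarticRaised ψ B C D E * ψ B C D A
      = (1/2 : ℂ) * quarticInner ψ * (if E = A then 1 else 0) := by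

  have h1 : ψ 0 0 1 0 = ψ 0 0 0 1 := ((hψ 0 0 0 1).2.2).symm
  have h2 : ψ 0 1 0 0 = ψ 0 0 0 1 := (hψ 0 1 0 0).2.1.trans h1
  have h3 : ψ 1 0 0 0 = ψ 0 0 0 1 := (hψ 1 0 0 0).1.trans h2
  have h4 : ψ 0 1 0 1 = ψ 0 0 1 1 := (hψ 0 1 0 1).2.1
  have h5 : ψ 0 1 1 0 = ψ 0 0 1 1 := (hψ 0 1 1 0).2.2.trans h4
  have h6 : ψ 1 0 0 1 = ψ 0 0 1 1 := (hψ 1 0 0 1).1.trans h4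
  have h7 : ψ 1 0 1 0 = ψ 0 0 1 1 := (hψ 1 0 1 0).1.trans h5
  have h8 : ψ 1 1 0 0 = ψ 0 0 1 1 := (hψ 1 1 0 0).2.1.trans h7
  have h9 : ψ 1 0 1 1 = ψ 0 1 1 1 := (hψ 1 0 1 1).1
  have h10 : ψ 1 1 0 1 = ψ 0 1 1 1 := (hψ 1 1 0 1).2.1.trans h9
  have h11 : ψ 1 1 1 0 = ψ 0 1 1 1 := (hψ 1 1 1 0).2.2.trans h10
  fin_cases A <;> fin_cases E <;>
    simp only [Fin.mk_zero, Fin.mk_one, quarticRaised, quarticInner, eps, Fin.sum_univ_two, Fin.isValue,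
      Matrix.cons_val_zero, Matrix.cons_val_one, Matrix.head_cons,
      h1, h2, h3, h4, h5, h6, h7, h8, h9, h10, h11, if_true, if_false,
      reduceIte, one_ne_zero, zero_ne_one] <;> ring
end
end

section
/- If a quartic spinor ψ satisfies I(ψ)³ = 6·J(ψ)², then its associated binary quartic p_ψ has a repeated root: there exists a nonzero homogeneous linear form l ∈ ℂ[x,y] such that l² divides p_ψ. -/
set_option maxRecDepth 10000
set_option maxHeartbeats 4000000


noncomputable section

open Finset

/-- The invariant I(ψ) = ⟨ψ,ψ⟩. -/
def Ipsi (ψ : Fin 2 → Fin 2 → Fin 2 → Fin 2 → ℂ) : ℂ := quarticInner ψ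

/-- The invariant J(ψ). -/
def Jpsi (ψ : Fin 2 → Fin 2 → Fin 2 → Fin 2 → ℂ) : ℂ :=
  ∑ A, ∑ B, ∑ C, ∑ D, ∑ E, ∑ F, ∑ A1, ∑ B1, ∑ C1, ∑ D1, ∑ E1, ∑ F1,
    eps C C1 * eps D D1 * eps E E1 * eps F F1 * eps A A1 * eps B B1 *
      ψ A B C1 D1 * ψ C D E1 F1 * ψ E F A1 B1

/-- The Riemannian conjugate ψ† of a quartic spinor. -/
def quarticDagger (ψ : Fin 2 → Fin 2 → Fin 2 → Fin 2 → ℂ) :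
    Fin 2 → Fin 2 → Fin 2 → Fin 2 → ℂ :=
  fun A B C D =>
    (-1 : ℂ) ^ (A.val + B.val + C.val + D.val) *
      (starRingEnd ℂ) (ψ (1 - A) (1 - B) (1 - C) (1 - D))

/-- The Riemannian conjugate ω† of a quadratic spinor. -/
def quadDagger (ω : Fin 2 → Fin 2 → ℂ) : Fin 2 → Fin 2 → ℂ :=
  fun A B => (-1 : ℂ) ^ (A.val + B.val) * (starRingEnd ℂ) (ω (1 - A) (1 - B))

/-- The binary quartic p_ψ(x,y) associated to a quartic spinor, with π⁰ = x = X 0, π¹ = y = X 1. -/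
def binaryQuartic (ψ : Fin 2 → Fin 2 → Fin 2 → Fin 2 → ℂ) : MvPolynomial (Fin 2) ℂ :=
  ∑ A, ∑ B, ∑ C, ∑ D,
    MvPolynomial.C (ψ A B C D) * MvPolynomial.X A * MvPolynomial.X B *
      MvPolynomial.X C * MvPolynomial.X D

open Polynomial in
lemma double_root_evals (q : ℂ[X]) (r : ℂ) (h : (X - C r)^2 ∣ q) :
    q.eval r = 0 ∧ (derivative q).eval r = 0 := by
  obtain ⟨k, hk⟩ := h
  subst hk
  constructor
  · simp
  · simp [derivative_mul, derivative_pow]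

lemma mstep (s : Multiset ℂ) (n : ℕ) (h : Multiset.card s = n+1) :
    ∃ a t, s = a ::ₘ t ∧ Multiset.card t = n := by
  obtain ⟨a, ha⟩ := (Multiset.card_pos_iff_exists_mem (s := s)).mp (by omega)
  obtain ⟨t, rfl⟩ := Multiset.exists_cons_of_mem ha
  exact ⟨a, t, rfl, by simpa using h⟩

lemma mcard4 (s : Multiset ℂ) (h : Multiset.card s = 4) :
    ∃ r1 r2 r3 r4, s = {r1, r2, r3, r4} := by
  obtain ⟨r1, t, rfl, h1⟩ := mstep s 3 h
  obtain ⟨r2, t2, rfl, h2⟩ := mstep t 2 h1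
  obtain ⟨r3, t3, rfl, h3⟩ := mstep t2 1 h2
  obtain ⟨r4, t4, rfl, h4⟩ := mstep t3 0 h3
  exact ⟨r1, r2, r3, r4, by simp [Multiset.card_eq_zero.mp h4]⟩

lemma mcard3 (s : Multiset ℂ) (h : Multiset.card s = 3) :
    ∃ r1 r2 r3, s = {r1, r2, r3} := by
  obtain ⟨r1, t, rfl, h1⟩ := mstep s 2 h
  obtain ⟨r2, t2, rfl, h2⟩ := mstep t 1 h1
  obtain ⟨r3, t3, rfl, h3⟩ := mstep t2 0 h2
  exact ⟨r1, r2, r3, by simp [Multiset.card_eq_zero.mp h3]⟩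

open Polynomial in
lemma scalar4 (a b c d e : ℂ) (ha : a ≠ 0)
    (hIJ2 : (a*e - 4*b*d + 3*c^2)^3 = 27*(a*c*e - a*d^2 - b^2*e + 2*b*c*d - c^3)^2) :
    ∃ r : ℂ, a*r^4 + 4*b*r^3 + 6*c*r^2 + 4*d*r + e = 0 ∧
      4*a*r^3 + 12*b*r^2 + 12*c*r + 4*d = 0 := by
  set q : ℂ[X] := C a * X^4 + C (4*b) * X^3 + C (6*c) * X^2 + C (4*d) * X + C e with hq_def
  have hdeg : q.natDegree = 4 := by
    rw [hq_def]; compute_degree!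
  have hcard : Multiset.card q.roots = 4 := by
    rw [← hdeg]
    exact (Polynomial.splits_iff_card_roots.mp (IsAlgClosed.splits q))
  have hlead : q.leadingCoeff = a := by
    rw [Polynomial.leadingCoeff, hdeg, hq_def]
    simp [coeff_X_pow, coeff_C_mul, mul_assoc, coeff_X, coeff_C]
  obtain ⟨r1, r2, r3, r4, hroots⟩ := mcard4 q.roots hcard
  have q_eq : q = C a * ((X - C r1) * (X - C r2) * (X - C r3) * (X - C r4)) := by
    conv_lhs => rw [← Polynomial.C_leadingCoeff_mul_prod_multiset_X_sub_C (hcard.trans hdeg.symm)]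
    rw [hlead, hroots]
    simp only [Multiset.insert_eq_cons, Multiset.map_cons, Multiset.map_singleton,
      Multiset.prod_cons, Multiset.prod_singleton]
    ring
  -- suffices double root
  suffices hdr : ∃ r : ℂ, (X - C r)^2 ∣ q by
    obtain ⟨r, hr⟩ := hdr
    obtain ⟨h1, h2⟩ := double_root_evals q r hr
    rw [hq_def] at h1 h2
    simp only [eval_add, eval_mul, eval_pow, eval_C, eval_X, derivative_add, derivative_mul,
      derivative_pow, derivative_C, derivative_X, zero_mul, mul_one, zero_add, mul_zero,
      add_zero, one_mul] at h1 h2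
    exact ⟨r, by linear_combination h1, by linear_combination h2⟩
  -- Vieta
  have expand : (X - C r1) * (X - C r2) * (X - C r3) * (X - C r4)
      = X^4 - C (r1+r2+r3+r4) * X^3 + C (r1*r2+r1*r3+r1*r4+r2*r3+r2*r4+r3*r4) * X^2
        - C (r1*r2*r3+r1*r2*r4+r1*r3*r4+r2*r3*r4) * X + C (r1*r2*r3*r4) := by
    simp only [C_add, C_mul]; ring
  have q_eq2 := q_eq
  rw [expand] at q_eq2
  have co : ∀ k, q.coeff k = (C a * (X^4 - C (r1+r2+r3+r4) * X^3
      + C (r1*r2+r1*r3+r1*r4+r2*r3+r2*r4+r3*r4) * X^2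
      - C (r1*r2*r3+r1*r2*r4+r1*r3*r4+r2*r3*r4) * X + C (r1*r2*r3*r4))).coeff k := by
    intro k; rw [q_eq2]
  have h3 := co 3
  have h2 := co 2
  have h1 := co 1
  have h0 := co 0
  simp only [hq_def, coeff_add, coeff_sub, coeff_C_mul, coeff_X_pow, coeff_X, coeff_C,
    mul_coeff_zero] at h3 h2 h1 h0
  norm_num at h3 h2 h1 h0
  -- discriminant identity
  have key : a^6 * ((r1-r2)*(r1-r3)*(r1-r4)*(r2-r3)*(r2-r4)*(r3-r4))^2 = 0 := by
    have hb : b = -(a*(r1+r2+r3+r4))/4 := by linear_combination h3/4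
    have hc : c = a*(r1*r2+r1*r3+r1*r4+r2*r3+r2*r4+r3*r4)/6 := by linear_combination h2/6
    have hd : d = -(a*(r1*r2*r3+r1*r2*r4+r1*r3*r4+r2*r3*r4))/4 := by linear_combination h1/4
    have he : e = a*(r1*r2*r3*r4) := by linear_combination h0
    subst hb hc hd he
    linear_combination 256 * hIJ2
  have hprod : (r1-r2)*(r1-r3)*(r1-r4)*(r2-r3)*(r2-r4)*(r3-r4) = 0 := by
    have := mul_eq_zero.mp key
    rcases this with h | h
    · exact absurd h (pow_ne_zero _ ha)
    · exact pow_eq_zero_iff (by norm_num) |>.mp h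
  rcases mul_eq_zero.mp hprod with h | h34
  rcases mul_eq_zero.mp h with h | h24
  rcases mul_eq_zero.mp h with h | h23
  rcases mul_eq_zero.mp h with h | h14
  rcases mul_eq_zero.mp h with h12 | h13
  · exact ⟨r1, C a * ((X - C r3) * (X - C r4)), by rw [q_eq, show r2 = r1 by linear_combination -h12]; ring⟩
  · exact ⟨r1, C a * ((X - C r2) * (X - C r4)), by rw [q_eq, show r3 = r1 by linear_combination -h13]; ring⟩
  · exact ⟨r1, C a * ((X - C r2) * (X - C r3)), by rw [q_eq, show r4 = r1 by linear_combination -h14]; ring⟩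
  · exact ⟨r2, C a * ((X - C r1) * (X - C r4)), by rw [q_eq, show r3 = r2 by linear_combination -h23]; ring⟩
  · exact ⟨r2, C a * ((X - C r1) * (X - C r3)), by rw [q_eq, show r4 = r2 by linear_combination -h24]; ring⟩
  · exact ⟨r3, C a * ((X - C r1) * (X - C r2)), by rw [q_eq, show r4 = r3 by linear_combination -h34]; ring⟩

open Polynomial in
lemma scalar3 (b c d e : ℂ) (hb : b ≠ 0)
    (hIJ2 : (-(4*b*d) + 3*c^2)^3 = 27*(-(b^2*e) + 2*b*c*d - c^3)^2) :
    ∃ r : ℂ, 4*b*r^3 + 6*c*r^2 + 4*d*r + e = 0 ∧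
      12*b*r^2 + 12*c*r + 4*d = 0 := by
  set q : ℂ[X] := C (4*b) * X^3 + C (6*c) * X^2 + C (4*d) * X + C e with hq_def
  have hb4 : (4:ℂ)*b ≠ 0 := by simpa using hb
  have hdeg : q.natDegree = 3 := by
    rw [hq_def]; compute_degree!
  have hcard : Multiset.card q.roots = 3 := by
    rw [← hdeg]
    exact (Polynomial.splits_iff_card_roots.mp (IsAlgClosed.splits q))
  have hlead : q.leadingCoeff = 4*b := by
    rw [Polynomial.leadingCoeff, hdeg, hq_def]
    simp [coeff_X_pow, coeff_C_mul, mul_assoc, coeff_X, coeff_C]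
  obtain ⟨r1, r2, r3, hroots⟩ := mcard3 q.roots hcard
  have q_eq : q = C (4*b) * ((X - C r1) * (X - C r2) * (X - C r3)) := by
    conv_lhs => rw [← Polynomial.C_leadingCoeff_mul_prod_multiset_X_sub_C (hcard.trans hdeg.symm)]
    rw [hlead, hroots]
    simp only [Multiset.insert_eq_cons, Multiset.map_cons, Multiset.map_singleton,
      Multiset.prod_cons, Multiset.prod_singleton]
    ring
  suffices hdr : ∃ r : ℂ, (X - C r)^2 ∣ q by
    obtain ⟨r, hr⟩ := hdr
    obtain ⟨h1, h2⟩ := double_root_evals q r hr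
    rw [hq_def] at h1 h2
    simp only [eval_add, eval_mul, eval_pow, eval_C, eval_X, derivative_add, derivative_mul,
      derivative_pow, derivative_C, derivative_X, zero_mul, mul_one, zero_add, mul_zero,
      add_zero, one_mul] at h1 h2
    exact ⟨r, by linear_combination h1, by linear_combination h2⟩
  have expand : (X - C r1) * (X - C r2) * (X - C r3)
      = X^3 - C (r1+r2+r3) * X^2 + C (r1*r2+r1*r3+r2*r3) * X - C (r1*r2*r3) := by
    simp only [C_add, C_mul]; ring
  have q_eq2 := q_eq
  rw [expand] at q_eq2
  have co : ∀ k, q.coeff k = (C (4*b) * (X^3 - C (r1+r2+r3) * X^2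
      + C (r1*r2+r1*r3+r2*r3) * X - C (r1*r2*r3))).coeff k := by
    intro k; rw [q_eq2]
  have h2 := co 2
  have h1 := co 1
  have h0 := co 0
  simp only [hq_def, coeff_add, coeff_sub, coeff_C_mul, coeff_X_pow, coeff_X, coeff_C,
    mul_coeff_zero] at h2 h1 h0
  norm_num at h2 h1 h0
  have key : b^6 * ((r1-r2)*(r1-r3)*(r2-r3))^2 = 0 := by
    have hc : c = -(4*b*(r1+r2+r3))/6 := by linear_combination h2/6
    have hd : d = 4*b*(r1*r2+r1*r3+r2*r3)/4 := by linear_combination h1/4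
    have he : e = -(4*b*(r1*r2*r3)) := by linear_combination h0
    subst hc hd he
    linear_combination hIJ2/16
  have hprod : (r1-r2)*(r1-r3)*(r2-r3) = 0 := by
    rcases mul_eq_zero.mp key with h | h
    · exact absurd h (pow_ne_zero _ hb)
    · exact pow_eq_zero_iff (by norm_num) |>.mp h
  rcases mul_eq_zero.mp hprod with h | h23
  rcases mul_eq_zero.mp h with h12 | h13
  · exact ⟨r1, C (4*b) * (X - C r3), by rw [q_eq, show r2 = r1 by linear_combination -h12]; ring⟩
  · exact ⟨r1, C (4*b) * (X - C r2), by rw [q_eq, show r3 = r1 by linear_combination -h13]; ring⟩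
  · exact ⟨r2, C (4*b) * (X - C r1), by rw [q_eq, show r3 = r2 by linear_combination -h23]; ring⟩

open MvPolynomial in
lemma final_construct (p : MvPolynomial (Fin 2) ℂ) (a b c d e r : ℂ)
    (pexp : p = C a * X 0^4 + 4 * (C b * X 0^3 * X 1) + 6 * (C c * X 0^2 * X 1^2)
      + 4 * (C d * X 0 * X 1^3) + C e * X 1^4)
    (h1 : a*r^4 + 4*b*r^3 + 6*c*r^2 + 4*d*r + e = 0)
    (h2 : 4*a*r^3 + 12*b*r^2 + 12*c*r + 4*d = 0) :
    ∃ l : MvPolynomial (Fin 2) ℂ, l ≠ 0 ∧ l.IsHomogeneous 1 ∧ l ^ 2 ∣ p := by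
  refine ⟨X 0 - C r * X 1, ?_, ?_, ?_⟩
  · intro h0
    have heval := congrArg (MvPolynomial.eval (fun i : Fin 2 => if i = 0 then 1 else 0)) h0
    simp at heval
  · have hX0 : (X 0 : MvPolynomial (Fin 2) ℂ).IsHomogeneous 1 := isHomogeneous_X ℂ 0
    have hCX : (C r * X 1 : MvPolynomial (Fin 2) ℂ).IsHomogeneous 1 := by
      simpa using (isHomogeneous_C (Fin 2) r).mul (isHomogeneous_X ℂ 1)
    exact hX0.sub hCX
  · refine ⟨C a * X 0^2 + C (4*b+2*a*r) * X 0 * X 1 + C (6*c+8*b*r+3*a*r^2) * X 1^2, ?_⟩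
    have d_eq : d = -(a*r^3+3*b*r^2+3*c*r) := by linear_combination h2/4
    have e_eq : e = 3*a*r^4+8*b*r^3+6*c*r^2 := by linear_combination h1 - r*h2
    rw [pexp, d_eq, e_eq]
    simp only [map_add, map_mul, map_neg, map_pow, map_ofNat]
    ring

open MvPolynomial

/-- if I(ψ)³ = 6·J(ψ)² then the binary quartic p_ψ has a repeated root. -/
theorem repeated_root_of_I_cubed_eq_six_J_squared
    (ψ : Fin 2 → Fin 2 → Fin 2 → Fin 2 → ℂ) (hψ : IsQuartic ψ)
    (hIJ : Ipsi ψ ^ 3 = 6 * Jpsi ψ ^ 2) :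
    ∃ l : MvPolynomial (Fin 2) ℂ, l ≠ 0 ∧ l.IsHomogeneous 1 ∧ l ^ 2 ∣ binaryQuartic ψ := by
  obtain ⟨a, b, c, d, e, key⟩ : ∃ a b c d e : ℂ, ∀ A B C D : Fin 2,
      ψ A B C D = ![a, b, c, d, e] ⟨A.val+B.val+C.val+D.val, by omega⟩ := by
    refine ⟨ψ 0 0 0 0, ψ 0 0 0 1, ψ 0 0 1 1, ψ 0 1 1 1, ψ 1 1 1 1, ?_⟩
    have s1 : ∀ A B C D : Fin 2, ψ A B C D = ψ B A C D := fun A B C D => (hψ A B C D).1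
    have s2 : ∀ A B C D : Fin 2, ψ A B C D = ψ A C B D := fun A B C D => (hψ A B C D).2.1
    have s3 : ∀ A B C D : Fin 2, ψ A B C D = ψ A B D C := fun A B C D => (hψ A B C D).2.2
    intro A B C D
    fin_cases A <;> fin_cases B <;> fin_cases C <;> fin_cases D <;> norm_num <;> grind
  have hI : Ipsi ψ = 2 * (a * e - 4 * b * d + 3 * c ^ 2) := by
    simp only [Ipsi, quarticInner, Fin.sum_univ_two, eps, key]
    norm_num [Matrix.cons_val_zero, Matrix.cons_val_one]
    ring
  have hJ : Jpsi ψ = 6 * (a * c * e - a * d ^ 2 - b ^ 2 * e + 2 * b * c * d - c ^ 3) := by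
    simp only [Jpsi, Fin.sum_univ_two, eps, key]
    norm_num [Matrix.cons_val_zero, Matrix.cons_val_one]
    ring
  have pexp : binaryQuartic ψ = C a * X 0^4 + 4 * (C b * X 0^3 * X 1) + 6 * (C c * X 0^2 * X 1^2)
      + 4 * (C d * X 0 * X 1^3) + C e * X 1^4 := by
    simp only [binaryQuartic, Fin.sum_univ_two, key]
    norm_num [Matrix.cons_val_zero, Matrix.cons_val_one]
    ring
  rw [hI, hJ] at hIJ
  have hIJ2 : (a*e - 4*b*d + 3*c^2)^3
      = 27*(a*c*e - a*d^2 - b^2*e + 2*b*c*d - c^3)^2 := by linear_combination hIJ / 8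
  by_cases hab : a = 0 ∧ b = 0
  · obtain ⟨ha, hb⟩ := hab
    refine ⟨X 1, X_ne_zero 1, isHomogeneous_X ℂ 1,
      6 * (C c * X 0^2) + 4 * (C d * X 0 * X 1) + C e * X 1^2, ?_⟩
    rw [pexp, ha, hb]
    simp only [map_zero]
    ring
  · by_cases ha : a = 0
    · have hb : b ≠ 0 := fun h => hab ⟨ha, h⟩
      rw [ha] at hIJ2
      have hIJ3 : (-(4*b*d) + 3*c^2)^3 = 27*(-(b^2*e) + 2*b*c*d - c^3)^2 := by
        linear_combination hIJ2
      obtain ⟨r, h1, h2⟩ := scalar3 b c d e hb hIJ3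
      exact final_construct _ a b c d e r pexp
        (by rw [ha]; linear_combination h1) (by rw [ha]; linear_combination h2)
    · obtain ⟨r, h1, h2⟩ := scalar4 a b c d e ha hIJ2
      exact final_construct _ a b c d e r pexp h1 h2
end
end

section
/- Let ψ be a nonzero real quartic spinor (ψ† = ψ). Then the associated binary quartic p_ψ has no root of multiplicity three or more: there is no nonzero homogeneous linear form l ∈ ℂ[x,y] such that l³ divides p_ψ. -/
noncomputable section

open Finset

open MvPolynomial in
/-- auxiliary: decomposition of a degree-1 homogeneous binary form -/
lemma homog1_decomp' (l : MvPolynomial (Fin 2) ℂ) (h : l.IsHomogeneous 1) :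
    l = C (coeff (Finsupp.single 0 1) l) * X 0 + C (coeff (Finsupp.single 1 1) l) * X 1 := by
  ext m
  simp only [coeff_add, coeff_C_mul, coeff_X', mul_ite, mul_one, mul_zero]
  by_cases h0 : (Finsupp.single (0:Fin 2) 1) = m
  · subst h0
    have : ¬ (Finsupp.single (1:Fin 2) 1 = Finsupp.single (0:Fin 2) 1) := by
      intro hs
      have := DFunLike.congr_fun hs 0
      simp at this
    simp [this]
  · by_cases h1 : (Finsupp.single (1:Fin 2) 1) = m
    · subst h1
      simp [h0]
    · simp only [h0, h1, if_false, add_zero]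
      by_contra hc
      have hd : m.degree = 1 := by
        rw [Finsupp.degree_eq_weight_one]; exact h hc
      have hsum : m 0 + m 1 = 1 := by
        have h2 : m.degree = ∑ i : Fin 2, m i :=
          Finset.sum_subset (Finset.subset_univ _)
            (fun x _ hx => Finsupp.notMem_support_iff.mp hx)
        rw [h2, Fin.sum_univ_two] at hd
        exact hd
      rcases Nat.eq_zero_or_pos (m 0) with hm0 | hm0
      · apply h1
        have hm1 : m 1 = 1 := by omega
        ext i
        fin_cases i <;> simp [hm0, hm1, Finsupp.single_apply]
      · apply h0
        have hm0' : m 0 = 1 := by omega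
        have hm1 : m 1 = 0 := by omega
        ext i
        fin_cases i <;> simp [hm0', hm1, Finsupp.single_apply]

/-- the conjugate-antipodal ring endomorphism σ : x ↦ −y, y ↦ x, coefficients conjugated. -/
def sigmaHom' : MvPolynomial (Fin 2) ℂ →+* MvPolynomial (Fin 2) ℂ :=
  MvPolynomial.eval₂Hom (MvPolynomial.C.comp (starRingEnd ℂ))
    ![-(MvPolynomial.X 1), MvPolynomial.X 0]

lemma sigma_binaryQuartic' (ψ : Fin 2 → Fin 2 → Fin 2 → Fin 2 → ℂ) :
    sigmaHom' (binaryQuartic ψ) = binaryQuartic (quarticDagger ψ) := by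
  simp only [binaryQuartic, quarticDagger, sigmaHom', Fin.sum_univ_two, map_add, map_mul,
    MvPolynomial.eval₂Hom_C, MvPolynomial.eval₂Hom_X', RingHom.coe_comp, Function.comp_apply,
    Matrix.cons_val_zero, Matrix.cons_val_one, Matrix.head_cons]
  simp only [Fin.isValue, Fin.val_zero, Fin.val_one, show (1:Fin 2) - 0 = 1 from rfl,
    show (1:Fin 2) - 1 = 0 from rfl, pow_zero, pow_one, pow_succ, map_mul, map_one, map_neg,
    MvPolynomial.C_mul, MvPolynomial.C_neg, map_one, MvPolynomial.C_1]
  norm_num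
  ring

/-- dehomogenization at (X, 1) -/
def phiHom' : MvPolynomial (Fin 2) ℂ →+* Polynomial ℂ :=
  MvPolynomial.eval₂Hom (Polynomial.C) ![Polynomial.X, 1]

lemma collapse' (ψ : Fin 2 → Fin 2 → Fin 2 → Fin 2 → ℂ) (hψ : IsQuartic ψ) :
    ψ 0 0 1 0 = ψ 0 0 0 1 ∧ ψ 0 1 0 0 = ψ 0 0 0 1 ∧ ψ 1 0 0 0 = ψ 0 0 0 1 ∧
    ψ 0 1 0 1 = ψ 0 0 1 1 ∧ ψ 0 1 1 0 = ψ 0 0 1 1 ∧ ψ 1 0 0 1 = ψ 0 0 1 1 ∧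
    ψ 1 0 1 0 = ψ 0 0 1 1 ∧ ψ 1 1 0 0 = ψ 0 0 1 1 ∧
    ψ 1 0 1 1 = ψ 0 1 1 1 ∧ ψ 1 1 0 1 = ψ 0 1 1 1 ∧ ψ 1 1 1 0 = ψ 0 1 1 1 := by
  have h1 : ∀ A B C D, ψ A B C D = ψ B A C D := fun A B C D => (hψ A B C D).1
  have h2 : ∀ A B C D, ψ A B C D = ψ A C B D := fun A B C D => (hψ A B C D).2.1
  have h3 : ∀ A B C D, ψ A B C D = ψ A B D C := fun A B C D => (hψ A B C D).2.2
  refine ⟨h3 0 0 1 0, ?_, ?_, h2 0 1 0 1, ?_, ?_, ?_, ?_, h1 1 0 1 1, ?_, ?_⟩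
  · rw [h2 0 1 0 0, h3 0 0 1 0]
  · rw [h1 1 0 0 0, h2 0 1 0 0, h3 0 0 1 0]
  · rw [h3 0 1 1 0, h2 0 1 0 1]
  · rw [h1 1 0 0 1, h2 0 1 0 1]
  · rw [h1 1 0 1 0, h2 0 1 1 0, h3 0 1 1 0, h2 0 1 0 1]
  · rw [h2 1 1 0 0, h1 1 0 1 0, h2 0 1 1 0, h3 0 1 1 0, h2 0 1 0 1]
  · rw [h2 1 1 0 1, h1 1 0 1 1]
  · rw [h3 1 1 1 0, h2 1 1 0 1, h1 1 0 1 1]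

lemma phi_binaryQuartic' (ψ : Fin 2 → Fin 2 → Fin 2 → Fin 2 → ℂ) (hψ : IsQuartic ψ) :
    phiHom' (binaryQuartic ψ) =
      Polynomial.C (ψ 0 0 0 0) * Polynomial.X ^ 4 +
      Polynomial.C (4 * ψ 0 0 0 1) * Polynomial.X ^ 3 +
      Polynomial.C (6 * ψ 0 0 1 1) * Polynomial.X ^ 2 +
      Polynomial.C (4 * ψ 0 1 1 1) * Polynomial.X +
      Polynomial.C (ψ 1 1 1 1) := by
  obtain ⟨e1, e2, e3, e4, e5, e6, e7, e8, e9, e10, e11⟩ := collapse' ψ hψ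
  simp only [binaryQuartic, phiHom', Fin.sum_univ_two, map_add, map_mul,
    MvPolynomial.eval₂Hom_C, MvPolynomial.eval₂Hom_X', Matrix.cons_val_zero,
    Matrix.cons_val_one, Matrix.head_cons, e1, e2, e3, e4, e5, e6, e7, e8, e9, e10, e11,
    map_ofNat, Polynomial.C_mul]
  ring


/-- the binary quartic of a nonzero real quartic spinor has no root of
multiplicity three or more. -/
theorem real_quartic_no_triple_root
    (ψ : Fin 2 → Fin 2 → Fin 2 → Fin 2 → ℂ) (hψ : IsQuartic ψ)
    (hreal : quarticDagger ψ = ψ) (hne : ψ ≠ fun _ _ _ _ => 0) :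
    ¬ ∃ l : MvPolynomial (Fin 2) ℂ, l ≠ 0 ∧ l.IsHomogeneous 1 ∧ l ^ 3 ∣ binaryQuartic ψ := by
  rintro ⟨l, hl0, hl1, hdvd⟩
  obtain ⟨e1, e2, e3, e4, e5, e6, e7, e8, e9, e10, e11⟩ := collapse' ψ hψ
  -- reality relations for the coefficients
  have hr1 : (starRingEnd ℂ) (ψ 1 1 1 1) = ψ 0 0 0 0 := by
    have h := congrFun (congrFun (congrFun (congrFun hreal 0) 0) 0) 0
    simpa [quarticDagger, show (1:Fin 2) - 0 = 1 from rfl] using h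
  have hr2 : -(starRingEnd ℂ) (ψ 0 1 1 1) = ψ 0 0 0 1 := by
    have h := congrFun (congrFun (congrFun (congrFun hreal 0) 0) 0) 1
    simp only [quarticDagger, show (1:Fin 2) - 0 = 1 from rfl,
      show (1:Fin 2) - 1 = 0 from rfl, Fin.val_zero, Fin.val_one, e11] at h
    simpa using h
  -- nonvanishing of some coefficient
  have hzero : ψ 0 0 0 0 = 0 → ψ 0 0 0 1 = 0 → ψ 0 0 1 1 = 0 → ψ 0 1 1 1 = 0 →
      ψ 1 1 1 1 = 0 → False := by
    intro z1 z2 z3 z4 z5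
    apply hne
    funext A B C D
    fin_cases A <;> fin_cases B <;> fin_cases C <;> fin_cases D <;>
      simp only [Fin.mk_zero, Fin.mk_one, Fin.isValue, e1, e2, e3, e4, e5, e6, e7, e8, e9, e10, e11, z1, z2, z3, z4, z5]
  -- decompose l
  set α := MvPolynomial.coeff (Finsupp.single 0 1) l with hα_def
  set β := MvPolynomial.coeff (Finsupp.single 1 1) l with hβ_def
  have hlf : l = MvPolynomial.C α * MvPolynomial.X 0 + MvPolynomial.C β * MvPolynomial.X 1 :=
    homog1_decomp' l hl1
  have hαβ : ¬(α = 0 ∧ β = 0) := by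
    rintro ⟨h1, h2⟩
    apply hl0
    rw [hlf, h1, h2]
    simp
  -- σ fixes p
  have hσp : sigmaHom' (binaryQuartic ψ) = binaryQuartic ψ := by
    rw [sigma_binaryQuartic', hreal]
  have hσl : sigmaHom' l =
      MvPolynomial.C ((starRingEnd ℂ) β) * MvPolynomial.X 0 +
      MvPolynomial.C (-(starRingEnd ℂ) α) * MvPolynomial.X 1 := by
    rw [hlf]
    simp only [sigmaHom', map_add, map_mul, MvPolynomial.eval₂Hom_C, MvPolynomial.eval₂Hom_X',
      RingHom.coe_comp, Function.comp_apply, Matrix.cons_val_zero, Matrix.cons_val_one,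
      Matrix.head_cons, MvPolynomial.C_neg]
    ring
  have hσdvd : (sigmaHom' l) ^ 3 ∣ binaryQuartic ψ := by
    have h := map_dvd sigmaHom' hdvd
    rwa [map_pow, hσp] at h
  -- push everything to one variable
  set q := phiHom' (binaryQuartic ψ) with hq_def
  have hq : q = Polynomial.C (ψ 0 0 0 0) * Polynomial.X ^ 4 +
      Polynomial.C (4 * ψ 0 0 0 1) * Polynomial.X ^ 3 +
      Polynomial.C (6 * ψ 0 0 1 1) * Polynomial.X ^ 2 +
      Polynomial.C (4 * ψ 0 1 1 1) * Polynomial.X +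
      Polynomial.C (ψ 1 1 1 1) := phi_binaryQuartic' ψ hψ
  have hφl : phiHom' l = Polynomial.C α * Polynomial.X + Polynomial.C β := by
    rw [hlf]
    simp [phiHom']
  have hφσl : phiHom' (sigmaHom' l) =
      Polynomial.C ((starRingEnd ℂ) β) * Polynomial.X + Polynomial.C (-(starRingEnd ℂ) α) := by
    rw [hσl]
    simp [phiHom']
  have hqd : (Polynomial.C α * Polynomial.X + Polynomial.C β) ^ 3 ∣ q := by
    have h := map_dvd phiHom' hdvd
    rwa [map_pow, hφl] at h
  have hqd2 : (Polynomial.C ((starRingEnd ℂ) β) * Polynomial.X +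
      Polynomial.C (-(starRingEnd ℂ) α)) ^ 3 ∣ q := by
    have h := map_dvd phiHom' hσdvd
    rwa [map_pow, hφσl] at h
  -- a cube of X dividing q leads to a contradiction
  have hX3 : ¬ (Polynomial.X ^ 3 ∣ q) := by
    intro h3
    rw [Polynomial.X_pow_dvd_iff] at h3
    have c0 := h3 0 (by norm_num)
    have c1 := h3 1 (by norm_num)
    have c2 := h3 2 (by norm_num)
    rw [hq] at c0 c1 c2
    simp only [Polynomial.coeff_add, Polynomial.coeff_C_mul, Polynomial.coeff_X_pow,
      Polynomial.coeff_C, Polynomial.coeff_X] at c0 c1 c2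
    norm_num at c0 c1 c2
    have he : ψ 1 1 1 1 = 0 := c0
    have hd : ψ 0 1 1 1 = 0 := c1
    have hc : ψ 0 0 1 1 = 0 := c2
    refine hzero ?_ ?_ hc hd he
    · rw [← hr1, he, map_zero]
    · rw [← hr2, hd, map_zero, neg_zero]
  by_cases hα : α = 0
  · -- root at x = 0 direction from the conjugated factor
    apply hX3
    refine dvd_trans ?_ hqd2
    rw [hα, map_zero, neg_zero, map_zero, add_zero, mul_pow]
    exact Dvd.dvd.mul_left (dvd_refl _) _
  · by_cases hβ : β = 0
    · apply hX3
      refine dvd_trans ?_ hqd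
      rw [hβ, map_zero, add_zero, mul_pow]
      exact Dvd.dvd.mul_left (dvd_refl _) _
    · -- the generic case: two distinct roots of multiplicity ≥ 3
      set r1 : ℂ := -(β / α) with hr1_def
      set r2 : ℂ := (starRingEnd ℂ) α / (starRingEnd ℂ) β with hr2_def
      have hβc : (starRingEnd ℂ) β ≠ 0 := by simpa using hβ
      have hfac1 : Polynomial.C α * Polynomial.X + Polynomial.C β =
          Polynomial.C α * (Polynomial.X - Polynomial.C r1) := by
        have h : α * r1 = -β := by
          rw [hr1_def]
          field_simp [hr1_def]
          try ring
        rw [mul_sub, ← Polynomial.C_mul, h, Polynomial.C_neg, sub_neg_eq_add]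
      have hfac2 : Polynomial.C ((starRingEnd ℂ) β) * Polynomial.X +
          Polynomial.C (-(starRingEnd ℂ) α) =
          Polynomial.C ((starRingEnd ℂ) β) * (Polynomial.X - Polynomial.C r2) := by
        have h : (starRingEnd ℂ) β * r2 = (starRingEnd ℂ) α := by
          rw [hr2_def]
          field_simp [hr2_def]
          try ring
        rw [mul_sub, ← Polynomial.C_mul, h, Polynomial.C_neg, sub_eq_add_neg]
      have hd1 : (Polynomial.X - Polynomial.C r1) ^ 3 ∣ q := by
        refine dvd_trans ?_ hqd
        rw [hfac1, mul_pow]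
        exact Dvd.dvd.mul_left (dvd_refl _) _
      have hd2 : (Polynomial.X - Polynomial.C r2) ^ 3 ∣ q := by
        refine dvd_trans ?_ hqd2
        rw [hfac2, mul_pow]
        exact Dvd.dvd.mul_left (dvd_refl _) _
      have hne12 : r1 ≠ r2 := by
        intro h
        rw [hr1_def, hr2_def, ← neg_div, div_eq_div_iff hα hβc] at h
        have h3 : (Complex.normSq α : ℂ) + (Complex.normSq β : ℂ) = 0 := by
          rw [← Complex.mul_conj, ← Complex.mul_conj]
          linear_combination -h
        rw [← Complex.ofReal_add, Complex.ofReal_eq_zero] at h3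
        have h4 : Complex.normSq α = 0 := by
          nlinarith [Complex.normSq_nonneg α, Complex.normSq_nonneg β]
        exact hα (Complex.normSq_eq_zero.mp h4)
      have hcop : IsCoprime ((Polynomial.X - Polynomial.C r1) ^ 3)
          ((Polynomial.X - Polynomial.C r2) ^ 3) := by
        refine IsCoprime.pow ?_
        exact Polynomial.isCoprime_X_sub_C_of_isUnit_sub
          (isUnit_iff_ne_zero.mpr (sub_ne_zero.mpr hne12))
      have hdvd6 : (Polynomial.X - Polynomial.C r1) ^ 3 *
          (Polynomial.X - Polynomial.C r2) ^ 3 ∣ q := hcop.mul_dvd hd1 hd2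
      have hq0 : q ≠ 0 := by
        intro h0
        exact hX3 (by rw [h0]; exact dvd_zero _)
      have h6 : 6 ≤ q.natDegree := by
        have hdeg : ((Polynomial.X - Polynomial.C r1) ^ 3 *
            (Polynomial.X - Polynomial.C r2) ^ 3).natDegree = 6 := by
          rw [Polynomial.Monic.natDegree_mul ((Polynomial.monic_X_sub_C r1).pow 3)
            ((Polynomial.monic_X_sub_C r2).pow 3), Polynomial.natDegree_pow,
            Polynomial.natDegree_pow, Polynomial.natDegree_X_sub_C,
            Polynomial.natDegree_X_sub_C]
        rw [← hdeg]
        exact Polynomial.natDegree_le_of_dvd hdvd6 hq0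
      have h4 : q.natDegree ≤ 4 := by
        rw [hq]
        compute_degree
      omega
end
end
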